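/- Every morphism of regularised Frobenius algebras is both a monomorphism and an epimorphism. -/

import Mathlib

open CategoryTheory MonoidalCategory

/-- A regularised Frobenius algebra in a monoidal category `C` whose hom-sets are
topological spaces. -/
structure RFAData (C : Type*) [Category C] [MonoidalCategory C]
    [∀ X Y : C, TopologicalSpace (X ⟶ Y)] where
  A : C
  μ : ℝ → ((A ⊗ A) ⟶ A)
  η : ℝ → (𝟙_ C ⟶ A)
  Δ : ℝ → (A ⟶ A ⊗ A)
  ε : ℝ → (A ⟶ 𝟙_ C)
  P : ℝ → (A ⟶ A)
  unit_rel : ∀ a₁ a₂ b₁ b₂ : ℝ, 0 < a₁ → 0 < a₂ → 0 < b₁ → 0 < b₂ → a₁ + a₂ = b₁ + b₂ →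
    (ρ_ A).inv ≫ (A ◁ η a₂) ≫ μ a₁ = (λ_ A).inv ≫ (η b₂ ▷ A) ≫ μ b₁
  assoc_rel : ∀ a₁ a₂ b₁ b₂ : ℝ, 0 < a₁ → 0 < a₂ → 0 < b₁ → 0 < b₂ → a₁ + a₂ = b₁ + b₂ →
    (A ◁ μ a₂) ≫ μ a₁ = (α_ A A A).inv ≫ (μ b₂ ▷ A) ≫ μ b₁
  P_def : ∀ a₁ a₂ : ℝ, 0 < a₁ → 0 < a₂ →
    P (a₁ + a₂) = (ρ_ A).inv ≫ (A ◁ η a₂) ≫ μ a₁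
  P_cont : ContinuousOn P (Set.Ioi 0)
  P_lim : Filter.Tendsto P (nhdsWithin 0 (Set.Ioi 0)) (nhds (𝟙 A))
  counit_rel : ∀ a₁ a₂ b₁ b₂ : ℝ, 0 < a₁ → 0 < a₂ → 0 < b₁ → 0 < b₂ → a₁ + a₂ = b₁ + b₂ →
    Δ a₁ ≫ (A ◁ ε a₂) ≫ (ρ_ A).hom = Δ b₁ ≫ (ε b₂ ▷ A) ≫ (λ_ A).hom
  coassoc_rel : ∀ a₁ a₂ b₁ b₂ : ℝ, 0 < a₁ → 0 < a₂ → 0 < b₁ → 0 < b₂ → a₁ + a₂ = b₁ + b₂ →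
    Δ a₁ ≫ (A ◁ Δ a₂) = Δ b₁ ≫ (Δ b₂ ▷ A) ≫ (α_ A A A).hom
  P'_def : ∀ a₁ a₂ : ℝ, 0 < a₁ → 0 < a₂ →
    P (a₁ + a₂) = Δ a₁ ≫ (A ◁ ε a₂) ≫ (ρ_ A).hom
  frob_rel : ∀ a₁ a₂ b₁ b₂ c₁ c₂ : ℝ, 0 < a₁ → 0 < a₂ → 0 < b₁ → 0 < b₂ → 0 < c₁ → 0 < c₂ →
    a₁ + a₂ = b₁ + b₂ → b₁ + b₂ = c₁ + c₂ →
    (Δ a₂ ▷ A) ≫ (α_ A A A).hom ≫ (A ◁ μ a₁) = μ b₂ ≫ Δ b₁ ∧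
    μ b₂ ≫ Δ b₁ = (A ◁ Δ c₂) ≫ (α_ A A A).inv ≫ (μ c₁ ▷ A)

/-- The "snake" (zig-zag) identity for a regularised Frobenius algebra: the composite of the
copairing with the pairing equals a composite of regularisation maps. -/
private lemma RFAData.snake_eq {C : Type*} [Category C] [MonoidalCategory C]
    [∀ X Y : C, TopologicalSpace (X ⟶ Y)] (F : RFAData C) (u v : ℝ)
    (hu : 0 < u) (hv : 0 < v) :
    (λ_ F.A).inv ≫ ((F.η (u/2) ≫ F.Δ ((u+v)/4)) ▷ F.A) ≫ (α_ F.A F.A F.A).hom ≫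
      (F.A ◁ (F.μ ((u+v)/4) ≫ F.ε (v/2))) ≫ (ρ_ F.A).hom = F.P u ≫ F.P v := by
  have hx : (0:ℝ) < (u+v)/4 := by positivity
  have hu2 : (0:ℝ) < u/2 := by positivity
  have hv2 : (0:ℝ) < v/2 := by positivity
  have hfrob := (F.frob_rel ((u+v)/4) ((u+v)/4) (v/2) (u/2) (v/2) (u/2)
      hx hx hv2 hu2 hv2 hu2 (by ring) rfl).1
  have h1 : F.P u = (λ_ F.A).inv ≫ (F.η (u/2) ▷ F.A) ≫ F.μ (u/2) := by
    have h := F.P_def (u/2) (u/2) hu2 hu2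
    rw [F.unit_rel (u/2) (u/2) (u/2) (u/2) hu2 hu2 hu2 hu2 rfl] at h
    simpa [show u/2 + u/2 = u by ring] using h
  have h2 : F.P v = F.Δ (v/2) ≫ (F.A ◁ F.ε (v/2)) ≫ (ρ_ F.A).hom := by
    simpa [show v/2 + v/2 = v by ring] using F.P'_def (v/2) (v/2) hv2 hv2
  simp only [comp_whiskerRight, MonoidalCategory.whiskerLeft_comp, Category.assoc]
  slice_lhs 3 5 => rw [hfrob]
  rw [h1, h2]
  simp only [Category.assoc]

/-- Every morphism of regularised Frobenius algebras is both a monomorphism and an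
epimorphism. -/
theorem stmt11 {C : Type*} [Category C] [MonoidalCategory C]
    [∀ X Y : C, TopologicalSpace (X ⟶ Y)] [∀ X Y : C, T2Space (X ⟶ Y)]
    (hcomp₁ : ∀ {X Y Z : C} (f : X ⟶ Y), Continuous fun g : Y ⟶ Z => f ≫ g)
    (hcomp₂ : ∀ {X Y Z : C} (g : Y ⟶ Z), Continuous fun f : X ⟶ Y => f ≫ g)
    (F G : RFAData C) (φ : F.A ⟶ G.A)
    (hη : ∀ a : ℝ, 0 < a → F.η a ≫ φ = G.η a)
    (hμ : ∀ a : ℝ, 0 < a → F.μ a ≫ φ = (φ ⊗ₘ φ) ≫ G.μ a)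
    (hΔ : ∀ a : ℝ, 0 < a → φ ≫ G.Δ a = F.Δ a ≫ (φ ⊗ₘ φ))
    (hε : ∀ a : ℝ, 0 < a → φ ≫ G.ε a = F.ε a) :
    Mono φ ∧ Epi φ := by
  -- the approximate two-sided inverse `ψ`
  have key : ∀ u v : ℝ, 0 < u → 0 < v → ∃ ψ : G.A ⟶ F.A,
      φ ≫ ψ = F.P u ≫ F.P v ∧ ψ ≫ φ = G.P u ≫ G.P v := by
    intro u v hu hv
    have hx : (0:ℝ) < (u+v)/4 := by positivity
    have hu2 : (0:ℝ) < u/2 := by positivity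
    have hv2 : (0:ℝ) < v/2 := by positivity
    refine ⟨(λ_ G.A).inv ≫ ((F.η (u/2) ≫ F.Δ ((u+v)/4)) ▷ G.A) ≫ (α_ F.A F.A G.A).hom ≫
      (F.A ◁ ((φ ▷ G.A) ≫ G.μ ((u+v)/4) ≫ G.ε (v/2))) ≫ (ρ_ F.A).hom, ?_, ?_⟩
    · rw [← F.snake_eq u v hu hv]
      have hm : F.A ◁ φ ≫ φ ▷ G.A ≫ G.μ ((u+v)/4) ≫ G.ε (v/2)
          = F.μ ((u+v)/4) ≫ F.ε (v/2) := by
        rw [← tensorHom_def'_assoc, ← Category.assoc, ← hμ _ hx, Category.assoc, hε _ hv2]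
      rw [leftUnitor_inv_naturality_assoc, whisker_exchange_assoc,
        associator_naturality_right_assoc, ← MonoidalCategory.whiskerLeft_comp_assoc, hm]
    · rw [← G.snake_eq u v hu hv]
      simp only [Category.assoc]
      rw [← rightUnitor_naturality, ← Category.assoc (F.A ◁ _), whisker_exchange,
        Category.assoc, ← associator_naturality_left_assoc,
        MonoidalCategory.whiskerLeft_comp, MonoidalCategory.whiskerLeft_comp]
      simp only [Category.assoc]
      rw [← associator_naturality_middle_assoc, ← comp_whiskerRight_assoc,
        ← comp_whiskerRight_assoc]
      have hγ : ((F.η (u/2) ≫ F.Δ ((u+v)/4)) ≫ (φ ▷ F.A)) ≫ (G.A ◁ φ)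
          = G.η (u/2) ≫ G.Δ ((u+v)/4) := by
        rw [Category.assoc, Category.assoc, ← MonoidalCategory.tensorHom_def, ← hΔ _ hx,
          ← Category.assoc, hη _ hu2]
      rw [hγ]
  -- cancellation helpers via limits
  have cancelF : ∀ {X : C} (p q : X ⟶ F.A),
      (∀ v : ℝ, 0 < v → p ≫ F.P v = q ≫ F.P v) → p = q := by
    intro X p q hpq
    have t1 : Filter.Tendsto (fun v => p ≫ F.P v) (nhdsWithin 0 (Set.Ioi 0)) (nhds p) := by
      have := ((hcomp₁ p).tendsto (𝟙 F.A)).comp F.P_lim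
      simpa [Function.comp_def] using this
    have t2' : Filter.Tendsto (fun v => q ≫ F.P v) (nhdsWithin 0 (Set.Ioi 0)) (nhds q) := by
      have := ((hcomp₁ q).tendsto (𝟙 F.A)).comp F.P_lim
      simpa [Function.comp_def] using this
    have t2 : Filter.Tendsto (fun v => p ≫ F.P v) (nhdsWithin 0 (Set.Ioi 0)) (nhds q) := by
      refine t2'.congr' ?_
      filter_upwards [self_mem_nhdsWithin] with v hv
      exact (hpq v hv).symm
    exact tendsto_nhds_unique t1 t2
  have cancelG : ∀ {X : C} (p q : G.A ⟶ X),
      (∀ v : ℝ, 0 < v → G.P v ≫ p = G.P v ≫ q) → p = q := by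
    intro X p q hpq
    have t1 : Filter.Tendsto (fun v => G.P v ≫ p) (nhdsWithin 0 (Set.Ioi 0)) (nhds p) := by
      have := ((hcomp₂ p).tendsto (𝟙 G.A)).comp G.P_lim
      simpa [Function.comp_def] using this
    have t2' : Filter.Tendsto (fun v => G.P v ≫ q) (nhdsWithin 0 (Set.Ioi 0)) (nhds q) := by
      have := ((hcomp₂ q).tendsto (𝟙 G.A)).comp G.P_lim
      simpa [Function.comp_def] using this
    have t2 : Filter.Tendsto (fun v => G.P v ≫ p) (nhdsWithin 0 (Set.Ioi 0)) (nhds q) := by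
      refine t2'.congr' ?_
      filter_upwards [self_mem_nhdsWithin] with v hv
      exact (hpq v hv).symm
    exact tendsto_nhds_unique t1 t2
  constructor
  · refine ⟨fun {Z} f g h => ?_⟩
    apply cancelF
    intro u hu
    apply cancelF
    intro v hv
    obtain ⟨ψ, h1, -⟩ := key u v hu hv
    have : f ≫ φ ≫ ψ = g ≫ φ ≫ ψ := by
      rw [← Category.assoc, h, Category.assoc]
    rw [h1] at this
    simpa [Category.assoc] using this
  · refine ⟨fun {Z} f g h => ?_⟩
    apply cancelG
    intro v hv
    apply cancelG
    intro u hu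
    obtain ⟨ψ, -, h2⟩ := key u v hu hv
    have : (ψ ≫ φ) ≫ f = (ψ ≫ φ) ≫ g := by
      rw [Category.assoc, h, Category.assoc]
    rw [h2] at this
    simpa [Category.assoc] using this
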